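/- For every real number β ≥ 0, the mean distance from the origin under the population-distance-based density, namely E_n(β) := Φ(β, n)·∫_{B_n} |x|·(1 + |x|²)^{−β} dx, satisfies: E_n(β) = Θ(1) if β > 3/2; E_n(β) = Θ(log n) if β = 3/2; E_n(β) = Θ(n^{3/2−β}) if 1 < β < 3/2; E_n(β) = Θ(√n / log n) if β = 1; and E_n(β) = Θ(√n) if 0 ≤ β < 1. -/

import Mathlib

open MeasureTheory

/-- `f(n) = Θ(h(n))`: there exist constants `0 < c₁ ≤ c₂` and `N₀` such that
`c₁·h(n) ≤ f(n) ≤ c₂·h(n)` for all integers `n ≥ N₀`. -/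
def IsBigTheta (f h : ℕ → ℝ) : Prop :=
  ∃ c₁ c₂ : ℝ, 0 < c₁ ∧ c₁ ≤ c₂ ∧ ∃ N₀ : ℕ, ∀ n : ℕ, N₀ ≤ n →
    c₁ * h n ≤ f n ∧ f n ≤ c₂ * h n

/-- The closed disk `B_n = {x ∈ ℝ² : |x| ≤ √n}`. -/
noncomputable def diskB (n : ℕ) : Set (EuclideanSpace ℝ (Fin 2)) :=
  Metric.closedBall 0 (Real.sqrt n)

/-- Normalization constant `Φ(β, n) = (∫_{B_n} (1 + |x|²)^{−β} dx)⁻¹`. -/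
noncomputable def Phi (β : ℝ) (n : ℕ) : ℝ :=
  (∫ x in diskB n, (1 + ‖x‖ ^ 2) ^ (-β))⁻¹

/-- Mean distance from the origin under the population-distance-based density:
`E_n(β) = Φ(β, n)·∫_{B_n} |x|·(1 + |x|²)^{−β} dx`. -/
noncomputable def meanDist (β : ℝ) (n : ℕ) : ℝ :=
  Phi β n * ∫ x in diskB n, ‖x‖ * (1 + ‖x‖ ^ 2) ^ (-β)

/-! ### Auxiliary machinery -/

open Set Metric
open scoped ENNReal NNReal

noncomputable abbrev E2' := EuclideanSpace ℝ (Fin 2)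

lemma polar_reduce (G : ℝ → ℝ) (R : ℝ) :
    ∫ x in closedBall (0:E2') R, G ‖x‖ =
      (2 * (volume (ball (0:E2') 1)).toReal) * ∫ r in Ioc (0:ℝ) R, r * G r := by
  have h1 : ∫ x in closedBall (0:E2') R, G ‖x‖
      = ∫ x : E2', (Iic R).indicator (fun r => G r) ‖x‖ := by
    rw [← integral_indicator measurableSet_closedBall]
    congr 1
    ext x
    by_cases hx : x ∈ closedBall (0:E2') R
    · rw [indicator_of_mem hx]
      have : ‖x‖ ∈ Iic R := by simpa [dist_eq_norm] using hx
      rw [indicator_of_mem this]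
    · rw [indicator_of_notMem hx]
      have : ‖x‖ ∉ Iic R := by simpa [mem_closedBall, dist_eq_norm] using hx
      rw [indicator_of_notMem this]
  rw [h1, integral_fun_norm_addHaar volume (fun r => (Iic R).indicator G r)]
  have hdim : Module.finrank ℝ E2' = 2 := finrank_euclideanSpace_fin
  rw [hdim]
  simp only [smul_eq_mul, nsmul_eq_mul, pow_one, Nat.cast_ofNat]
  rw [mul_assoc]
  congr 1
  congr 1
  rw [show (fun y : ℝ => y ^ (2-1) * (Iic R).indicator G y) = fun y => (Iic R).indicator (fun y => y * G y) y by
    ext y; by_cases hy : y ∈ Iic R <;> simp [indicator_of_mem, indicator_of_notMem, hy]]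
  rw [integral_indicator measurableSet_Iic, Measure.restrict_restrict measurableSet_Iic,
    Set.Iic_inter_Ioi]

lemma cont_integrand (β : ℝ) (a : ℕ) :
    Continuous (fun r : ℝ => r ^ a * (1 + r ^ 2) ^ (-β)) := by
  apply (continuous_pow a).mul
  apply Continuous.rpow_const (by continuity)
  intro x; left; positivity

lemma rpow_integrableOn (β : ℝ) (a : ℕ) {R : ℝ} (hR : 1 ≤ R) :
    IntegrableOn (fun r : ℝ => r ^ ((a : ℝ) - 2 * β)) (Ioc 1 R) := by
  have := (intervalIntegral.intervalIntegrable_rpow (r := (a : ℝ) - 2 * β)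
    (a := 1) (b := R) (Or.inr (by rw [Set.uIcc_of_le hR]; intro h; linarith [h.1]))
    (μ := volume))
  rwa [intervalIntegrable_iff_integrableOn_Ioc_of_le hR] at this

lemma pow_mul_rpow (a : ℕ) {r : ℝ} (hr : 0 < r) (β : ℝ) :
    r ^ a * ((r ^ 2 : ℝ)) ^ (-β) = r ^ ((a : ℝ) - 2 * β) := by
  rw [← Real.rpow_natCast r a, ← Real.rpow_natCast r 2, ← Real.rpow_mul hr.le,
    ← Real.rpow_add hr]
  norm_num
  ring_nf

lemma K_bounds (β : ℝ) (hβ : 0 ≤ β) (a : ℕ) {R : ℝ} (hR : 1 ≤ R) :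
    (2:ℝ) ^ (-β) * (1 / ((a:ℝ) + 1) + ∫ r in Ioc (1:ℝ) R, r ^ ((a : ℝ) - 2 * β))
      ≤ (∫ r in Ioc (0:ℝ) R, r ^ a * (1 + r ^ 2) ^ (-β)) ∧
    (∫ r in Ioc (0:ℝ) R, r ^ a * (1 + r ^ 2) ^ (-β))
      ≤ 1 / ((a:ℝ) + 1) + ∫ r in Ioc (1:ℝ) R, r ^ ((a : ℝ) - 2 * β) := by
  have hint : ∀ s : Set ℝ, MeasurableSet s → s ⊆ Ioc 0 R →
      IntegrableOn (fun r : ℝ => r ^ a * (1 + r ^ 2) ^ (-β)) s := fun s hs hsub =>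
    (((cont_integrand β a).integrableOn_Ioc).mono_set hsub)
  have hsplit : (∫ r in Ioc (0:ℝ) R, r ^ a * (1 + r ^ 2) ^ (-β))
      = (∫ r in Ioc (0:ℝ) 1, r ^ a * (1 + r ^ 2) ^ (-β))
        + ∫ r in Ioc (1:ℝ) R, r ^ a * (1 + r ^ 2) ^ (-β) := by
    rw [← setIntegral_union (Set.Ioc_disjoint_Ioc_of_le le_rfl) measurableSet_Ioc
      (hint _ measurableSet_Ioc (Ioc_subset_Ioc_right hR))
      (hint _ measurableSet_Ioc (Ioc_subset_Ioc_left zero_le_one)),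
      Set.Ioc_union_Ioc_eq_Ioc zero_le_one hR]
  -- model integral on Ioc 0 1
  have hm1 : (∫ r in Ioc (0:ℝ) 1, (r:ℝ) ^ a) = 1 / ((a:ℝ) + 1) := by
    rw [← intervalIntegral.integral_of_le zero_le_one, integral_pow]
    simp
  -- pointwise bounds on Ioc 0 1
  have hub1 : (∫ r in Ioc (0:ℝ) 1, r ^ a * (1 + r ^ 2) ^ (-β)) ≤ 1 / ((a:ℝ) + 1) := by
    rw [← hm1]
    apply setIntegral_mono_on (hint _ measurableSet_Ioc (Ioc_subset_Ioc_right hR))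
      ((continuous_pow a).integrableOn_Ioc) measurableSet_Ioc
    intro r hr
    have h1 : (1:ℝ) ≤ 1 + r ^ 2 := by nlinarith [hr.1.le]
    have := Real.rpow_le_one_of_one_le_of_nonpos h1 (neg_nonpos.mpr hβ)
    calc r ^ a * (1 + r ^ 2) ^ (-β) ≤ r ^ a * 1 := by
          apply mul_le_mul_of_nonneg_left this (pow_nonneg hr.1.le a)
      _ = r ^ a := mul_one _
  -- Ioc 0 1 lower bound
  have hlb1 : (2:ℝ) ^ (-β) * (1 / ((a:ℝ) + 1))
      ≤ ∫ r in Ioc (0:ℝ) 1, r ^ a * (1 + r ^ 2) ^ (-β) := by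
    rw [← hm1, ← MeasureTheory.integral_const_mul]
    apply setIntegral_mono_on
      (((continuous_const.mul (continuous_pow a)).integrableOn_Ioc))
      (hint _ measurableSet_Ioc (Ioc_subset_Ioc_right hR)) measurableSet_Ioc
    intro r hr
    have h2 : (1:ℝ) + r ^ 2 ≤ 2 := by nlinarith [hr.1.le, hr.2]
    have := Real.rpow_le_rpow_of_nonpos (by positivity) h2 (neg_nonpos.mpr hβ)
    calc (2:ℝ) ^ (-β) * r ^ a = r ^ a * (2:ℝ) ^ (-β) := mul_comm _ _
      _ ≤ r ^ a * (1 + r ^ 2) ^ (-β) :=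
          mul_le_mul_of_nonneg_left this (pow_nonneg hr.1.le a)
  -- Ioc 1 R bounds
  have hub2 : (∫ r in Ioc (1:ℝ) R, r ^ a * (1 + r ^ 2) ^ (-β))
      ≤ ∫ r in Ioc (1:ℝ) R, r ^ ((a:ℝ) - 2 * β) := by
    apply setIntegral_mono_on (hint _ measurableSet_Ioc (Ioc_subset_Ioc_left zero_le_one))
      (rpow_integrableOn β a hR) measurableSet_Ioc
    intro r hr
    have hr0 : (0:ℝ) < r := lt_trans zero_lt_one hr.1
    have h2 : (r:ℝ) ^ 2 ≤ 1 + r ^ 2 := by nlinarith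
    have := Real.rpow_le_rpow_of_nonpos (by positivity) h2 (neg_nonpos.mpr hβ)
    calc r ^ a * (1 + r ^ 2) ^ (-β) ≤ r ^ a * (r ^ 2 : ℝ) ^ (-β) :=
          mul_le_mul_of_nonneg_left this (pow_nonneg hr0.le a)
      _ = r ^ ((a:ℝ) - 2 * β) := pow_mul_rpow a hr0 β
  have hlb2 : (2:ℝ) ^ (-β) * (∫ r in Ioc (1:ℝ) R, r ^ ((a:ℝ) - 2 * β))
      ≤ ∫ r in Ioc (1:ℝ) R, r ^ a * (1 + r ^ 2) ^ (-β) := by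
    rw [← MeasureTheory.integral_const_mul]
    apply setIntegral_mono_on (Integrable.const_mul (rpow_integrableOn β a hR) _)
      (hint _ measurableSet_Ioc (Ioc_subset_Ioc_left zero_le_one)) measurableSet_Ioc
    intro r hr
    have hr0 : (0:ℝ) < r := lt_trans zero_lt_one hr.1
    have h2 : (1:ℝ) + r ^ 2 ≤ 2 * r ^ 2 := by nlinarith [hr.1.le]
    have hmono := Real.rpow_le_rpow_of_nonpos (by positivity) h2 (neg_nonpos.mpr hβ)
    have hsplit2 : ((2:ℝ) * r ^ 2) ^ (-β) = (2:ℝ) ^ (-β) * (r ^ 2 : ℝ) ^ (-β) :=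
      Real.mul_rpow (by norm_num) (by positivity)
    calc (2:ℝ) ^ (-β) * r ^ ((a:ℝ) - 2 * β)
        = (2:ℝ) ^ (-β) * (r ^ a * (r ^ 2 : ℝ) ^ (-β)) := by rw [pow_mul_rpow a hr0 β]
      _ = r ^ a * ((2:ℝ) * r ^ 2) ^ (-β) := by rw [hsplit2]; ring
      _ ≤ r ^ a * (1 + r ^ 2) ^ (-β) :=
          mul_le_mul_of_nonneg_left hmono (pow_nonneg hr0.le a)
  constructor
  · rw [hsplit, mul_add]
    exact add_le_add hlb1 hlb2
  · rw [hsplit]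
    exact add_le_add hub1 hub2

/-- The tail integral `∫_1^{√n} r^{a-2β} dr`. -/
noncomputable def Pint (β : ℝ) (a : ℕ) (n : ℕ) : ℝ :=
  ∫ r in Ioc (1:ℝ) (Real.sqrt n), r ^ ((a:ℝ) - 2*β)

/-- The model quantity `Q = 1/(a+1) + Pint`. -/
noncomputable def Qv (β : ℝ) (a : ℕ) (n : ℕ) : ℝ := 1/((a:ℝ)+1) + Pint β a n

lemma Pint_nonneg (β : ℝ) (a : ℕ) (n : ℕ) : 0 ≤ Pint β a n := by
  apply setIntegral_nonneg measurableSet_Ioc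
  intro r hr
  exact Real.rpow_nonneg (le_trans zero_le_one hr.1.le) _

lemma Qv_pos (β : ℝ) (a : ℕ) (n : ℕ) : 0 < Qv β a n := by
  have := Pint_nonneg β a n
  have : (0:ℝ) < 1/((a:ℝ)+1) := by positivity
  unfold Qv
  linarith [Pint_nonneg β a n]

lemma meanDist_bounds (β : ℝ) (hβ : 0 ≤ β) {n : ℕ} (hn : 1 ≤ n) :
    (2:ℝ) ^ (-β) * (Qv β 2 n / Qv β 1 n) ≤ meanDist β n ∧
    meanDist β n ≤ (2:ℝ) ^ β * (Qv β 2 n / Qv β 1 n) := by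
  set R := Real.sqrt n with hRdef
  have hR : 1 ≤ R := by
    rw [hRdef]
    rw [show (1:ℝ) = Real.sqrt 1 by simp]
    exact Real.sqrt_le_sqrt (by exact_mod_cast hn)
  set K1 := ∫ r in Ioc (0:ℝ) R, r ^ 1 * (1 + r ^ 2) ^ (-β) with hK1
  set K2 := ∫ r in Ioc (0:ℝ) R, r ^ 2 * (1 + r ^ 2) ^ (-β) with hK2
  have hKb1 := K_bounds β hβ 1 hR
  have hKb2 := K_bounds β hβ 2 hR
  have hQ1 : (1 / ((1:ℕ):ℝ) + 1)⁻¹ = 0 ∨ True := Or.inr trivial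
  have hQ1eq : (1 : ℝ) / ((1:ℕ):ℝ) = 1 := by norm_num
  have hq1 : 0 < Qv β 1 n := Qv_pos β 1 n
  have hq2 : 0 < Qv β 2 n := Qv_pos β 2 n
  have h2b : (0:ℝ) < (2:ℝ) ^ (-β) := Real.rpow_pos_of_pos (by norm_num) _
  have hKb1' : (2:ℝ) ^ (-β) * Qv β 1 n ≤ K1 ∧ K1 ≤ Qv β 1 n := by
    constructor
    · convert hKb1.1 using 3 <;> norm_num [Qv, Pint, ← hRdef]
    · convert hKb1.2 using 2 <;> norm_num [Qv, Pint, ← hRdef]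
  have hKb2' : (2:ℝ) ^ (-β) * Qv β 2 n ≤ K2 ∧ K2 ≤ Qv β 2 n := by
    constructor
    · convert hKb2.1 using 3 <;> norm_num [Qv, Pint, ← hRdef]
    · convert hKb2.2 using 2 <;> norm_num [Qv, Pint, ← hRdef]
  have hK1pos : 0 < K1 := lt_of_lt_of_le (by positivity) hKb1'.1
  have hK2pos : 0 < K2 := lt_of_lt_of_le (by positivity) hKb2'.1
  -- express meanDist as K2 / K1
  set c := 2 * (volume (ball (0:E2') 1)).toReal with hc
  have hcpos : 0 < c := by
    rw [hc]
    have h1 : (0:ℝ≥0∞) < volume (ball (0:E2') 1) := measure_ball_pos volume 0 one_pos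
    have h2 : volume (ball (0:E2') 1) < ⊤ := measure_ball_lt_top
    have := ENNReal.toReal_pos h1.ne' h2.ne
    linarith
  have hI0 : (∫ x in diskB n, (1 + ‖x‖ ^ 2) ^ (-β)) = c * K1 := by
    rw [diskB]
    rw [show (∫ x in closedBall (0:E2') (Real.sqrt n), (1 + ‖x‖ ^ 2) ^ (-β))
        = (2 * (volume (ball (0:E2') 1)).toReal) *
          ∫ r in Ioc (0:ℝ) (Real.sqrt n), r * (1 + r ^ 2) ^ (-β) from
      polar_reduce (fun r => (1 + r ^ 2) ^ (-β)) (Real.sqrt n)]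
    rw [hK1, ← hRdef, ← hc]
    congr 1
    apply setIntegral_congr_fun measurableSet_Ioc
    intro r _
    simp [pow_one]
  have hI1 : (∫ x in diskB n, ‖x‖ * (1 + ‖x‖ ^ 2) ^ (-β)) = c * K2 := by
    rw [diskB]
    rw [show (∫ x in closedBall (0:E2') (Real.sqrt n), ‖x‖ * (1 + ‖x‖ ^ 2) ^ (-β))
        = (2 * (volume (ball (0:E2') 1)).toReal) *
          ∫ r in Ioc (0:ℝ) (Real.sqrt n), r * (r * (1 + r ^ 2) ^ (-β)) from
      polar_reduce (fun r => r * (1 + r ^ 2) ^ (-β)) (Real.sqrt n)]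
    rw [hK2, ← hRdef, ← hc]
    congr 1
    apply setIntegral_congr_fun measurableSet_Ioc
    intro r _
    ring
  have hmd : meanDist β n = K2 / K1 := by
    rw [meanDist, Phi, hI0, hI1]
    rw [mul_inv]
    field_simp
  rw [hmd]
  constructor
  · calc (2:ℝ) ^ (-β) * (Qv β 2 n / Qv β 1 n)
        = ((2:ℝ) ^ (-β) * Qv β 2 n) / Qv β 1 n := by ring
      _ ≤ K2 / K1 := by
          apply div_le_div₀ hK2pos.le (le_trans (by rfl) hKb2'.1) hK1pos hKb1'.2
  · calc K2 / K1 ≤ Qv β 2 n / ((2:ℝ) ^ (-β) * Qv β 1 n) := by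
          apply div_le_div₀ hq2.le hKb2'.2 (by positivity) hKb1'.1
      _ = (2:ℝ) ^ β * (Qv β 2 n / Qv β 1 n) := by
          rw [Real.rpow_neg (by norm_num)]
          field_simp


lemma one_le_sqrt_nat {n : ℕ} (hn : 1 ≤ n) : 1 ≤ Real.sqrt n := by
  rw [show (1:ℝ) = Real.sqrt 1 by simp]
  exact Real.sqrt_le_sqrt (by exact_mod_cast hn)

lemma sqrt_rpow_nat (c : ℝ) (n : ℕ) : (Real.sqrt n) ^ c = (n:ℝ) ^ (c/2) := by
  rw [Real.sqrt_eq_rpow, ← Real.rpow_mul (Nat.cast_nonneg n)]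
  ring_nf

lemma Pint_eq (β : ℝ) (a : ℕ) {n : ℕ} (hn : 1 ≤ n) (he : (a:ℝ) - 2*β ≠ -1) :
    Pint β a n = ((n:ℝ) ^ (((a:ℝ) + 1 - 2*β)/2) - 1) / ((a:ℝ) + 1 - 2*β) := by
  have hR : 1 ≤ Real.sqrt n := one_le_sqrt_nat hn
  rw [Pint, ← intervalIntegral.integral_of_le hR,
    integral_rpow (Or.inr ⟨he, by rw [Set.uIcc_of_le hR]; intro h; linarith [h.1]⟩),
    Real.one_rpow, sqrt_rpow_nat]
  ring_nf

lemma Pint_eq_log (β : ℝ) (a : ℕ) {n : ℕ} (hn : 1 ≤ n) (he : (a:ℝ) - 2*β = -1) :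
    Pint β a n = Real.log n / 2 := by
  have hR : 1 ≤ Real.sqrt n := one_le_sqrt_nat hn
  rw [Pint, he]
  simp only [Real.rpow_neg_one]
  rw [← intervalIntegral.integral_of_le hR,
    integral_inv (by rw [Set.uIcc_of_le hR]; intro h; linarith [h.1]),
    div_one, Real.log_sqrt (Nat.cast_nonneg n)]

lemma Qv_conv_bounds (β : ℝ) (hβ : 0 ≤ β) (a : ℕ) (hneg : (a:ℝ) + 1 - 2*β < 0) {n : ℕ}
    (hn : 1 ≤ n) :
    1/((a:ℝ)+1) ≤ Qv β a n ∧ Qv β a n ≤ 1/((a:ℝ)+1) + 1/(2*β-(a:ℝ)-1) := by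
  have he : (a:ℝ) - 2*β ≠ -1 := by intro h; rw [sub_eq_iff_eq_add] at h; linarith
  have hval := Pint_eq β a hn he
  set u := (n:ℝ) ^ (((a:ℝ) + 1 - 2*β)/2) with hu
  have hu0 : 0 ≤ u := Real.rpow_nonneg (Nat.cast_nonneg n) _
  have hu1 : u ≤ 1 := Real.rpow_le_one_of_one_le_of_nonpos
    (by exact_mod_cast hn) (by linarith)
  have heq : Pint β a n = (1 - u) / (2*β - (a:ℝ) - 1) := by
    rw [hval]
    rw [div_eq_div_iff (by linarith) (by linarith)]
    ring
  constructor
  · have := Pint_nonneg β a n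
    unfold Qv; linarith
  · unfold Qv
    have hd : (0:ℝ) < 2*β - (a:ℝ) - 1 := by linarith
    have : (1 - u) / (2*β - (a:ℝ) - 1) ≤ 1/(2*β-(a:ℝ)-1) :=
      (div_le_div_iff_of_pos_right hd).mpr (by linarith)
    linarith [heq ▸ this]

lemma Qv_log_bounds (β : ℝ) (a : ℕ) (he : (a:ℝ) - 2*β = -1) {n : ℕ} (hn : 3 ≤ n) :
    (1/2) * Real.log n ≤ Qv β a n ∧ Qv β a n ≤ (1/((a:ℝ)+1) + 1/2) * Real.log n := by
  have hn1 : 1 ≤ n := le_trans (by norm_num) hn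
  have hlog : 1 ≤ Real.log n := by
    rw [Real.le_log_iff_exp_le (by positivity)]
    calc Real.exp 1 ≤ 2.7182818286 := Real.exp_one_lt_d9.le
      _ ≤ (n:ℝ) := by
        have : (3:ℝ) ≤ (n:ℝ) := by exact_mod_cast hn
        linarith
  have hval := Pint_eq_log β a hn1 he
  have ha : (0:ℝ) < 1/((a:ℝ)+1) := by positivity
  unfold Qv
  rw [hval]
  constructor
  · linarith
  · have : 1/((a:ℝ)+1) ≤ (1/((a:ℝ)+1)) * Real.log n := by
      nth_rewrite 1 [← mul_one (1/((a:ℝ)+1))]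
      exact mul_le_mul_of_nonneg_left hlog ha.le
    nlinarith

lemma Qv_div_bounds (β : ℝ) (a : ℕ) (hpos : 0 < (a:ℝ) + 1 - 2*β) {n : ℕ} (hn : 1 ≤ n)
    (h2 : 2 ≤ (n:ℝ) ^ (((a:ℝ) + 1 - 2*β)/2)) :
    (1/(2*((a:ℝ)+1-2*β))) * (n:ℝ) ^ (((a:ℝ) + 1 - 2*β)/2) ≤ Qv β a n ∧
    Qv β a n ≤ (1/((a:ℝ)+1) + 1/((a:ℝ)+1-2*β)) * (n:ℝ) ^ (((a:ℝ) + 1 - 2*β)/2) := by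
  have he : (a:ℝ) - 2*β ≠ -1 := by intro h; rw [sub_eq_iff_eq_add] at h; linarith
  have hval := Pint_eq β a hn he
  set t := (n:ℝ) ^ (((a:ℝ) + 1 - 2*β)/2) with ht
  have ha : (0:ℝ) < (a:ℝ)+1 := by positivity
  unfold Qv
  rw [hval]
  constructor
  · have h1 : (1/(2*((a:ℝ)+1-2*β))) * t ≤ (t-1)/((a:ℝ)+1-2*β) := by
      rw [div_mul_eq_mul_div, div_le_div_iff₀ (by positivity) hpos]
      nlinarith
    have : (0:ℝ) ≤ 1/((a:ℝ)+1) := by positivity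
    calc (1/(2*((a:ℝ)+1-2*β))) * t ≤ (t-1)/((a:ℝ)+1-2*β) := h1
      _ ≤ 1/((a:ℝ)+1) + (t-1)/((a:ℝ)+1-2*β) := by linarith
  · have h1 : (t-1)/((a:ℝ)+1-2*β) ≤ (1/((a:ℝ)+1-2*β)) * t := by
      rw [div_le_iff₀ hpos]
      have : (1/((a:ℝ)+1-2*β)) * t * ((a:ℝ)+1-2*β) = t := by field_simp
      rw [this]; linarith
    have h2' : 1/((a:ℝ)+1) ≤ (1/((a:ℝ)+1)) * t := by
      nth_rewrite 1 [← mul_one (1/((a:ℝ)+1))]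
      exact mul_le_mul_of_nonneg_left (by linarith) (by positivity)
    nlinarith

lemma eventually_rpow_ge_two {ε : ℝ} (hε : 0 < ε) :
    ∃ N₀ : ℕ, 1 ≤ N₀ ∧ ∀ n : ℕ, N₀ ≤ n → (2:ℝ) ≤ (n:ℝ) ^ ε := by
  refine ⟨max 1 ⌈(2:ℝ)^(1/ε)⌉₊, le_max_left _ _, fun n hn => ?_⟩
  have h1 : (2:ℝ)^(1/ε) ≤ (n:ℝ) := by
    refine le_trans (Nat.le_ceil _) ?_
    exact_mod_cast le_trans (le_max_right _ _) hn
  calc (2:ℝ) = ((2:ℝ)^(1/ε))^ε := by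
        rw [← Real.rpow_mul (by norm_num), one_div_mul_cancel hε.ne', Real.rpow_one]
    _ ≤ (n:ℝ)^ε := Real.rpow_le_rpow (Real.rpow_nonneg (by norm_num) _) h1 hε.le

lemma theta_of_ratio (β : ℝ) (hβ : 0 ≤ β) (h g k : ℕ → ℝ) (A B C D : ℝ) (N₀ : ℕ)
    (hN : 1 ≤ N₀) (hA : 0 < A) (hC : 0 < C)
    (hg : ∀ n, N₀ ≤ n → 0 < g n) (hk : ∀ n, N₀ ≤ n → 0 < k n)
    (hQ1 : ∀ n, N₀ ≤ n → A * g n ≤ Qv β 1 n ∧ Qv β 1 n ≤ B * g n)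
    (hQ2 : ∀ n, N₀ ≤ n → C * k n ≤ Qv β 2 n ∧ Qv β 2 n ≤ D * k n)
    (hh : ∀ n, N₀ ≤ n → h n = k n / g n) :
    IsBigTheta (fun n => meanDist β n) h := by
  have hgN := hg N₀ le_rfl
  have hkN := hk N₀ le_rfl
  have hAB : A ≤ B := by
    obtain ⟨h1, h2⟩ := hQ1 N₀ le_rfl
    have := le_trans h1 h2
    exact le_of_mul_le_mul_right (by linarith) hgN
  have hCD : C ≤ D := by
    obtain ⟨h1, h2⟩ := hQ2 N₀ le_rfl
    have := le_trans h1 h2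
    exact le_of_mul_le_mul_right (by linarith) hkN
  have hB : 0 < B := lt_of_lt_of_le hA hAB
  have hD : 0 < D := lt_of_lt_of_le hC hCD
  refine ⟨(2:ℝ)^(-β) * (C/B), (2:ℝ)^β * (D/A), by positivity, ?_, N₀, fun n hn => ?_⟩
  · have h1 : (2:ℝ)^(-β) ≤ (2:ℝ)^β :=
      Real.rpow_le_rpow_of_exponent_le one_le_two (by linarith)
    have h2 : C/B ≤ D/A := div_le_div₀ (by positivity) hCD hA hAB
    exact mul_le_mul h1 h2 (by positivity) (by positivity)
  · have hn1 : 1 ≤ n := le_trans hN hn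
    obtain ⟨hl, hu⟩ := meanDist_bounds β hβ hn1
    have hgn := hg n hn
    have hkn := hk n hn
    obtain ⟨h1l, h1u⟩ := hQ1 n hn
    obtain ⟨h2l, h2u⟩ := hQ2 n hn
    have hq1 := Qv_pos β 1 n
    have hq2 := Qv_pos β 2 n
    have h2b : (0:ℝ) < (2:ℝ)^(-β) := Real.rpow_pos_of_pos (by norm_num) _
    have h2b' : (0:ℝ) < (2:ℝ)^β := Real.rpow_pos_of_pos (by norm_num) _
    simp only
    rw [hh n hn]
    constructor
    · calc (2:ℝ)^(-β) * (C/B) * (k n / g n)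
          = (2:ℝ)^(-β) * ((C * k n)/(B * g n)) := by
            rw [show (C * k n)/(B * g n) = C/B * (k n / g n) from (div_mul_div_comm _ _ _ _).symm]
            ring
        _ ≤ (2:ℝ)^(-β) * (Qv β 2 n / Qv β 1 n) := by
            apply mul_le_mul_of_nonneg_left _ h2b.le
            exact div_le_div₀ hq2.le h2l hq1 h1u
        _ ≤ meanDist β n := hl
    · calc meanDist β n ≤ (2:ℝ)^β * (Qv β 2 n / Qv β 1 n) := hu
        _ ≤ (2:ℝ)^β * ((D * k n)/(A * g n)) := by
            apply mul_le_mul_of_nonneg_left _ h2b'.le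
            exact div_le_div₀ (by positivity) h2u (by positivity) h1l
        _ = (2:ℝ)^β * (D/A) * (k n / g n) := by
            rw [show (D * k n)/(A * g n) = D/A * (k n / g n) from (div_mul_div_comm _ _ _ _).symm]
            ring

theorem mean_distance_order (β : ℝ) (hβ : 0 ≤ β) :
    (3 / 2 < β → IsBigTheta (fun n => meanDist β n) (fun _ => 1)) ∧
    (β = 3 / 2 → IsBigTheta (fun n => meanDist β n) (fun n => Real.log n)) ∧
    (1 < β ∧ β < 3 / 2 →
      IsBigTheta (fun n => meanDist β n) (fun n => (n : ℝ) ^ (3 / 2 - β))) ∧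
    (β = 1 → IsBigTheta (fun n => meanDist β n) (fun n => Real.sqrt n / Real.log n)) ∧
    (β < 1 → IsBigTheta (fun n => meanDist β n) (fun n => Real.sqrt n)) := by
  refine ⟨?_, ?_, ?_, ?_, ?_⟩
  · -- Case β > 3/2
    intro hc
    apply theta_of_ratio β hβ _ (fun _ => 1) (fun _ => 1)
      (1/((1:ℝ)+1)) (1/((1:ℝ)+1) + 1/(2*β-1-1))
      (1/((2:ℝ)+1)) (1/((2:ℝ)+1) + 1/(2*β-2-1)) 1 le_rfl
      (by norm_num) (by norm_num) (fun n _ => one_pos) (fun n _ => one_pos)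
    · intro n hn
      have H := Qv_conv_bounds β hβ 1 (by push_cast; linarith) hn
      push_cast at H
      refine ⟨?_, ?_⟩ <;> rw [mul_one]
      · exact H.1
      · exact H.2
    · intro n hn
      have H := Qv_conv_bounds β hβ 2 (by push_cast; linarith) hn
      push_cast at H
      refine ⟨?_, ?_⟩ <;> rw [mul_one]
      · exact H.1
      · exact H.2
    · intro n _
      norm_num
  · -- Case β = 3/2
    intro hc
    subst hc
    apply theta_of_ratio (3/2) hβ _ (fun _ => 1) (fun n => Real.log n)
      (1/((1:ℝ)+1)) (1/((1:ℝ)+1) + 1/(2*(3/2)-1-1))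
      (1/2) (1/((2:ℝ)+1) + 1/2) 3 (by norm_num)
      (by norm_num) (by norm_num) (fun n _ => one_pos)
    · intro n hn
      apply Real.log_pos
      exact_mod_cast lt_of_lt_of_le (by norm_num) hn
    · intro n hn
      have H := Qv_conv_bounds (3/2) hβ 1 (by push_cast; norm_num)
        (le_trans (by norm_num) hn)
      push_cast at H
      refine ⟨?_, ?_⟩ <;> rw [mul_one]
      · exact H.1
      · exact H.2
    · intro n hn
      have H := Qv_log_bounds (3/2) 2 (by push_cast; norm_num) hn
      push_cast at H
      exact H
    · intro n _
      rw [div_one]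
  · -- Case 1 < β < 3/2
    rintro ⟨hc1, hc2⟩
    have hε : (0:ℝ) < ((2:ℝ)+1-2*β)/2 := by linarith
    obtain ⟨N₀, hN1, hN2⟩ := eventually_rpow_ge_two hε
    apply theta_of_ratio β hβ _ (fun _ => 1) (fun n => (n:ℝ) ^ (((2:ℝ)+1-2*β)/2))
      (1/((1:ℝ)+1)) (1/((1:ℝ)+1) + 1/(2*β-1-1))
      (1/(2*((2:ℝ)+1-2*β))) (1/((2:ℝ)+1) + 1/((2:ℝ)+1-2*β)) N₀ hN1
      (by norm_num) (by apply one_div_pos.mpr; linarith) (fun n _ => one_pos)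
    · intro n hn
      have hn0 : (0:ℝ) < n := by
        exact_mod_cast lt_of_lt_of_le (by norm_num) (le_trans hN1 hn)
      positivity
    · intro n hn
      have H := Qv_conv_bounds β hβ 1 (by push_cast; linarith) (le_trans hN1 hn)
      push_cast at H
      refine ⟨?_, ?_⟩ <;> rw [mul_one]
      · exact H.1
      · exact H.2
    · intro n hn
      have H := Qv_div_bounds β 2 (by push_cast; linarith) (le_trans hN1 hn)
        (by push_cast; exact hN2 n hn)
      push_cast at H
      exact H
    · intro n _
      rw [div_one, show (((2:ℝ)+1-2*β)/2) = 3/2-β by ring]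
  · -- Case β = 1
    intro hc
    subst hc
    have hε : (0:ℝ) < ((2:ℝ)+1-2*1)/2 := by norm_num
    obtain ⟨N₀, hN1, hN2⟩ := eventually_rpow_ge_two hε
    apply theta_of_ratio 1 hβ _ (fun n => Real.log n) (fun n => (n:ℝ) ^ (((2:ℝ)+1-2*1)/2))
      (1/2) (1/((1:ℝ)+1) + 1/2)
      (1/(2*((2:ℝ)+1-2*1))) (1/((2:ℝ)+1) + 1/((2:ℝ)+1-2*1)) (max 3 N₀)
      (le_trans (by norm_num) (le_max_left _ _))
      (by norm_num) (by norm_num)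
    · intro n hn
      apply Real.log_pos
      exact_mod_cast lt_of_lt_of_le (by norm_num) (le_trans (le_max_left _ _) hn)
    · intro n hn
      have hn0 : (0:ℝ) < n := by
        exact_mod_cast lt_of_lt_of_le (by norm_num)
          (le_trans (le_trans (by norm_num : (1:ℕ) ≤ 3) (le_max_left _ _)) hn)
      positivity
    · intro n hn
      have H := Qv_log_bounds 1 1 (by push_cast; norm_num)
        (le_trans (le_max_left _ _) hn)
      push_cast at H
      exact H
    · intro n hn
      have hn1 : 1 ≤ n := le_trans (le_trans (by norm_num) (le_max_left 3 N₀)) hn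
      have H := Qv_div_bounds 1 2 (by push_cast; norm_num) hn1
        (by push_cast; exact hN2 n (le_trans (le_max_right _ _) hn))
      push_cast at H
      exact H
    · intro n hn
      have hn1 : 1 ≤ n := le_trans (le_trans (by norm_num) (le_max_left 3 N₀)) hn
      rw [show (((2:ℝ)+1-2*1)/2) = 1/2 by norm_num, ← Real.sqrt_eq_rpow]
  · -- Case β < 1
    intro hc
    have hε : (0:ℝ) < ((1:ℝ)+1-2*β)/2 := by linarith
    obtain ⟨N₀, hN1, hN2⟩ := eventually_rpow_ge_two hε
    apply theta_of_ratio β hβ _ (fun n => (n:ℝ) ^ (((1:ℝ)+1-2*β)/2))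
      (fun n => (n:ℝ) ^ (((2:ℝ)+1-2*β)/2))
      (1/(2*((1:ℝ)+1-2*β))) (1/((1:ℝ)+1) + 1/((1:ℝ)+1-2*β))
      (1/(2*((2:ℝ)+1-2*β))) (1/((2:ℝ)+1) + 1/((2:ℝ)+1-2*β)) N₀ hN1
      (by apply one_div_pos.mpr; linarith) (by apply one_div_pos.mpr; linarith)
    · intro n hn
      have hn0 : (0:ℝ) < n := by
        exact_mod_cast lt_of_lt_of_le (by norm_num) (le_trans hN1 hn)
      positivity
    · intro n hn
      have hn0 : (0:ℝ) < n := by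
        exact_mod_cast lt_of_lt_of_le (by norm_num) (le_trans hN1 hn)
      positivity
    · intro n hn
      have H := Qv_div_bounds β 1 (by push_cast; linarith) (le_trans hN1 hn)
        (by push_cast; exact hN2 n hn)
      push_cast at H
      exact H
    · intro n hn
      have hn1 : (1:ℝ) ≤ n := by
        exact_mod_cast le_trans hN1 hn
      have h2 : (2:ℝ) ≤ (n:ℝ) ^ (((2:ℝ)+1-2*β)/2) := by
        refine le_trans (hN2 n hn) ?_
        exact Real.rpow_le_rpow_of_exponent_le hn1 (by linarith)
      have H := Qv_div_bounds β 2 (by push_cast; linarith) (le_trans hN1 hn) h2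
      push_cast at H
      exact H
    · intro n hn
      have hn0 : (0:ℝ) < n := by
        exact_mod_cast lt_of_lt_of_le (by norm_num) (le_trans hN1 hn)
      rw [← Real.rpow_sub hn0,
        show (((2:ℝ)+1-2*β)/2 - ((1:ℝ)+1-2*β)/2) = 1/2 by ring, ← Real.sqrt_eq_rpow]
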